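/- arXiv:2107.06457 — 5 statements merged into one kernel-verified Lean document; each statement's English description precedes it below -/
import Mathlib

section
/- Let a, b : ℕ → ℂ be weight sequences and x, y : ℕ → ℂ be sequences of nonzero complex numbers (zeros) with x_n ≠ y_m for all n, m, and let N be a positive integer. Assume that for every k with 1 ≤ k ≤ N the series Σ_{n=1}^∞ a_n/x_n^k and Σ_{m=1}^∞ b_m/y_m^k converge absolutely, and that the double series Σ_{n,m} |a_n|·|b_m|/(|x_n|^N·|x_n − y_m|) and Σ_{n,m} |a_n|·|b_m|/(|y_m|^N·|x_n − y_m|) converge. Then Σ_{k=1}^{N} ζ_{x,a}(k)·ζ_{y,b}(N+1−k) = Σ_{n=1}^∞ a_n·ψ_{y,b}(x_n)/x_n^(N+1) + Σ_{m=1}^∞ b_m·ψ_{x,a}(y_m)/y_m^(N+1). -/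
private lemma aux_pt (A B X D : ℂ) (hX : X ≠ 0) (hD : D ≠ 0) (N : ℕ) :
    A * (B * X / D) / X ^ (N + 1) = A * B / (X ^ N * D) := by
  rw [pow_succ]
  field_simp

private lemma key_sum (N : ℕ) (x y : ℂ) (hx : x ≠ 0) (hy : y ≠ 0) (hxy : x ≠ y) :
    ∑ k ∈ Finset.Icc 1 N, 1 / (x ^ k * y ^ (N + 1 - k)) =
      1 / (x ^ N * (y - x)) + 1 / (y ^ N * (x - y)) := by
  have hyx : y - x ≠ 0 := sub_ne_zero.mpr (Ne.symm hxy)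
  have hxy' : x - y ≠ 0 := sub_ne_zero.mpr hxy
  have hxN : x ^ N ≠ 0 := pow_ne_zero _ hx
  have hyN : y ^ N ≠ 0 := pow_ne_zero _ hy
  have h1 : ∀ k ∈ Finset.Icc 1 N, 1 / (x ^ k * y ^ (N + 1 - k)) =
      y ^ (k - 1) * x ^ (N - k) / (x ^ N * y ^ N) := by
    intro k hk
    simp only [Finset.mem_Icc] at hk
    have ex : x ^ N = x ^ k * x ^ (N - k) := by rw [← pow_add]; congr 1; omega
    have ey : y ^ N = y ^ (N + 1 - k) * y ^ (k - 1) := by rw [← pow_add]; congr 1; omega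
    rw [ex, ey]
    field_simp
  rw [Finset.sum_congr rfl h1, ← Finset.sum_div]
  have h2 : ∑ k ∈ Finset.Icc 1 N, y ^ (k - 1) * x ^ (N - k) =
      ∑ i ∈ Finset.range N, y ^ i * x ^ (N - 1 - i) := by
    rw [← Finset.Ico_add_one_right_eq_Icc, Finset.sum_Ico_eq_sum_range]
    refine Finset.sum_congr rfl fun i hi => ?_
    congr 2 <;> omega
  rw [h2]
  have h3 := geom_sum₂_mul y x N
  have h4 : ∑ i ∈ Finset.range N, y ^ i * x ^ (N - 1 - i) = (y ^ N - x ^ N) / (y - x) := by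
    rw [eq_div_iff hyx, h3]
  rw [h4]
  field_simp
  ring

/-- Two-fold convolution of Dirichlet series: the convolution of two Dirichlet
series equals the sum of the same Dirichlet series with modified weights. -/
theorem statement6 (a b x y : ℕ → ℂ) (N : ℕ) (hN : 1 ≤ N)
    (hx : ∀ n, x n ≠ 0) (hy : ∀ m, y m ≠ 0)
    (hxy : ∀ n m, x n ≠ y m)
    (ha : ∀ k, 1 ≤ k → k ≤ N → Summable (fun n => ‖a n / x n ^ k‖))
    (hb : ∀ k, 1 ≤ k → k ≤ N → Summable (fun m => ‖b m / y m ^ k‖))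
    (hdx : Summable (fun p : ℕ × ℕ =>
      ‖a p.1‖ * ‖b p.2‖ / (‖x p.1‖ ^ N * ‖x p.1 - y p.2‖)))
    (hdy : Summable (fun p : ℕ × ℕ =>
      ‖a p.1‖ * ‖b p.2‖ / (‖y p.2‖ ^ N * ‖x p.1 - y p.2‖))) :
    ∑ k ∈ Finset.Icc 1 N,
        (∑' n : ℕ, a n / x n ^ k) * (∑' m : ℕ, b m / y m ^ (N + 1 - k)) =
      (∑' n : ℕ, a n * (∑' m : ℕ, b m * x n / (y m - x n)) / x n ^ (N + 1)) +
      (∑' m : ℕ, b m * (∑' n : ℕ, a n * y m / (x n - y m)) / y m ^ (N + 1)) := by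
  have hyx : ∀ n m, y m - x n ≠ 0 := fun n m => sub_ne_zero.mpr (Ne.symm (hxy n m))
  have hxy' : ∀ n m, x n - y m ≠ 0 := fun n m => sub_ne_zero.mpr (hxy n m)
  set g1 : ℕ × ℕ → ℂ := fun p => a p.1 * b p.2 / (x p.1 ^ N * (y p.2 - x p.1)) with hg1def
  set g2 : ℕ × ℕ → ℂ := fun p => a p.1 * b p.2 / (y p.2 ^ N * (x p.1 - y p.2)) with hg2def
  have hg1 : Summable g1 := by
    apply Summable.of_norm
    convert hdx using 1
    funext p
    simp [hg1def, norm_div, norm_mul, norm_pow, norm_sub_rev (y p.2)]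
  have hg2 : Summable g2 := by
    apply Summable.of_norm
    convert hdy using 1
    funext p
    simp [hg2def, norm_div, norm_mul, norm_pow]
  -- the k-th convolution term as a double sum
  have hstep : ∀ k ∈ Finset.Icc 1 N,
      (∑' n : ℕ, a n / x n ^ k) * (∑' m : ℕ, b m / y m ^ (N + 1 - k)) =
        ∑' p : ℕ × ℕ, a p.1 * b p.2 / (x p.1 ^ k * y p.2 ^ (N + 1 - k)) := by
    intro k hk
    simp only [Finset.mem_Icc] at hk
    rw [tsum_mul_tsum_of_summable_norm (ha k hk.1 hk.2)
      (hb (N + 1 - k) (by omega) (by omega))]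
    exact tsum_congr fun p => div_mul_div_comm _ _ _ _
  have hFk : ∀ k ∈ Finset.Icc 1 N,
      Summable (fun p : ℕ × ℕ => a p.1 * b p.2 / (x p.1 ^ k * y p.2 ^ (N + 1 - k))) := by
    intro k hk
    simp only [Finset.mem_Icc] at hk
    have := summable_mul_of_summable_norm (ha k hk.1 hk.2)
      (hb (N + 1 - k) (by omega) (by omega))
    convert this using 1
    · rfl
    funext p
    rw [div_mul_div_comm]
  calc ∑ k ∈ Finset.Icc 1 N,
        (∑' n : ℕ, a n / x n ^ k) * (∑' m : ℕ, b m / y m ^ (N + 1 - k))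
      = ∑ k ∈ Finset.Icc 1 N,
          ∑' p : ℕ × ℕ, a p.1 * b p.2 / (x p.1 ^ k * y p.2 ^ (N + 1 - k)) :=
        Finset.sum_congr rfl hstep
    _ = ∑' p : ℕ × ℕ, ∑ k ∈ Finset.Icc 1 N,
          a p.1 * b p.2 / (x p.1 ^ k * y p.2 ^ (N + 1 - k)) := (Summable.tsum_finsetSum hFk).symm
    _ = ∑' p : ℕ × ℕ, (g1 p + g2 p) := by
        refine tsum_congr fun p => ?_
        have : ∑ k ∈ Finset.Icc 1 N, a p.1 * b p.2 / (x p.1 ^ k * y p.2 ^ (N + 1 - k))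
            = a p.1 * b p.2 * ∑ k ∈ Finset.Icc 1 N, 1 / (x p.1 ^ k * y p.2 ^ (N + 1 - k)) := by
          rw [Finset.mul_sum]
          exact Finset.sum_congr rfl fun k _ => by rw [mul_one_div]
        rw [this, key_sum N (x p.1) (y p.2) (hx p.1) (hy p.2) (hxy p.1 p.2),
          mul_add, mul_one_div, mul_one_div]
    _ = (∑' p : ℕ × ℕ, g1 p) + ∑' p : ℕ × ℕ, g2 p := Summable.tsum_add hg1 hg2
    _ = (∑' n : ℕ, a n * (∑' m : ℕ, b m * x n / (y m - x n)) / x n ^ (N + 1)) +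
        (∑' m : ℕ, b m * (∑' n : ℕ, a n * y m / (x n - y m)) / y m ^ (N + 1)) := by
        congr 1
        · rw [Summable.tsum_prod' hg1 fun n => hg1.prod_factor n]
          refine tsum_congr fun n => ?_
          rw [← tsum_mul_left, ← tsum_div_const]
          refine tsum_congr fun m => ?_
          rw [show g1 (n, m) = a n * b m / (x n ^ N * (y m - x n)) by
            simp only [hg1def]]
          exact (aux_pt (a n) (b m) (x n) (y m - x n) (hx n) (hyx n m) N).symm
        · have hswap : ∑' p : ℕ × ℕ, g2 p = ∑' q : ℕ × ℕ, g2 (q.2, q.1) :=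
            ((Equiv.prodComm ℕ ℕ).tsum_eq g2).symm
          have hg2' : Summable (fun q : ℕ × ℕ => g2 (q.2, q.1)) :=
            ((Equiv.prodComm ℕ ℕ).summable_iff).2 hg2
          rw [hswap, Summable.tsum_prod' hg2' fun m => hg2'.prod_factor m]
          refine tsum_congr fun m => ?_
          rw [← tsum_mul_left, ← tsum_div_const]
          refine tsum_congr fun n => ?_
          rw [show g2 (n, m) = b m * a n / (y m ^ N * (x n - y m)) by
            simp only [hg2def]; ring]
          exact (aux_pt (b m) (a n) (y m) (x n - y m) (hy m) (hxy' n m) N).symm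
end

section
/- Let r ≥ 2 and for each i ∈ {1,…,r} let a⁽ⁱ⁾ : ℕ → ℂ be a weight sequence and x⁽ⁱ⁾ : ℕ → ℂ a sequence of nonzero complex numbers (zeros), with x⁽ⁱ⁾_p ≠ x⁽ʲ⁾_q whenever i ≠ j. Let N be an integer with N+1 ≥ r and assume all the series below converge absolutely, including the r-fold series of absolute values of the right-hand side summands. Then the r-fold convolution Σ over r-tuples (k₁,…,k_r) of positive integers with k₁+⋯+k_r = N+1 of ∏_{i=1}^r ζ_{x⁽ⁱ⁾,a⁽ⁱ⁾}(k_i) equals Σ_{i=1}^r Σ_{p=1}^∞ a⁽ⁱ⁾_p · ( ∏_{j≠i} ψ_{x⁽ʲ⁾,a⁽ʲ⁾}(x⁽ⁱ⁾_p) ) / (x⁽ⁱ⁾_p)^(N+1). -/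
set_option maxHeartbeats 1000000

open Finset

lemma geomAux (u v : ℂ) (huv : u ≠ v) (m : ℕ) :
    ∑ p ∈ Finset.HasAntidiagonal.antidiagonal m, u ^ p.1 * v ^ p.2 =
      (u ^ (m + 1) - v ^ (m + 1)) / (u - v) := by
  rw [Finset.Nat.sum_antidiagonal_eq_sum_range_succ (fun a b => u ^ a * v ^ b)]
  rw [eq_div_iff (sub_ne_zero.2 huv)]
  simpa using geom_sum₂_mul u v (m + 1)

lemma lagrangeQ {ι : Type*} [DecidableEq ι] (s : Finset ι) (hs : s.Nonempty)
    (y : ι → ℂ) (hinj : Set.InjOn y s) (z : ℂ) (hz : ∀ j ∈ s, y j ≠ z) :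
    ∑ l ∈ s, (y l / (y l - z)) * ∏ j ∈ s.erase l, (y j / (y j - y l)) =
      ∏ j ∈ s, y j / (y j - z) := by
  have h1 : ∑ l ∈ s, ∏ j ∈ s.erase l, ((y l - y j)⁻¹ * (z - y j)) = 1 := by
    have h := congrArg (Polynomial.eval z) (Lagrange.sum_basis hinj hs)
    simpa [Lagrange.basis, Lagrange.basisDivisor, Polynomial.eval_finset_sum,
      Polynomial.eval_prod] using h
  symm
  calc ∏ j ∈ s, y j / (y j - z)
      = ∑ l ∈ s, (∏ j ∈ s, y j / (y j - z)) *
          ∏ j ∈ s.erase l, ((y l - y j)⁻¹ * (z - y j)) := by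
        rw [← Finset.mul_sum, h1, mul_one]
    _ = ∑ l ∈ s, (y l / (y l - z)) * ∏ j ∈ s.erase l, (y j / (y j - y l)) := by
        refine Finset.sum_congr rfl fun l hl => ?_
        rw [← Finset.mul_prod_erase s _ hl, mul_assoc, ← Finset.prod_mul_distrib]
        congr 1
        refine Finset.prod_congr rfl fun j hj => ?_
        have hj' : j ∈ s := Finset.mem_of_mem_erase hj
        have hjz : y j - z ≠ 0 := sub_ne_zero.2 (hz j hj')
        have hjl : y j - y l ≠ 0 := sub_ne_zero.2 fun h =>
          (Finset.ne_of_mem_erase hj) (hinj hj' hl h)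
        have hlj : y l - y j ≠ 0 := fun h => hjl (by linear_combination -h)
        field_simp
        ring

lemma compH {ι : Type*} [DecidableEq ι] (y : ι → ℂ) (s : Finset ι) (hs : s.Nonempty)
    (hy0 : ∀ i ∈ s, y i ≠ 0) (hyy : ∀ i ∈ s, ∀ j ∈ s, i ≠ j → y i ≠ y j) : ∀ m : ℕ,
    ∑ k ∈ s.piAntidiag m, ∏ i ∈ s, ((y i)⁻¹) ^ k i =
      ∑ i ∈ s, ((y i)⁻¹) ^ m * ∏ j ∈ s.erase i, (y j / (y j - y i)) := by
  induction hs using Finset.Nonempty.cons_induction with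
  | singleton a =>
    intro m
    have hpa : ({a} : Finset ι).piAntidiag m = {fun i => if i = a then m else 0} := by
      ext k
      simp only [mem_piAntidiag, sum_singleton, mem_singleton, ne_eq]
      constructor
      · rintro ⟨rfl, hk⟩
        funext i
        by_cases hi : i = a
        · simp [hi]
        · simp [hi, not_imp_comm.1 (hk i) hi]
      · rintro rfl
        refine ⟨by simp, fun i hi => ?_⟩
        by_contra hia
        simp [hia] at hi
    rw [hpa]
    simp
  | cons a s ha hs IH =>
    intro m
    have hy0' : ∀ i ∈ s, y i ≠ 0 := fun i hi => hy0 i (mem_cons_of_mem hi)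
    have hyy' : ∀ i ∈ s, ∀ j ∈ s, i ≠ j → y i ≠ y j := fun i hi j hj =>
      hyy i (mem_cons_of_mem hi) j (mem_cons_of_mem hj)
    have IH' := IH hy0' hyy'
    have hya : y a ≠ 0 := hy0 a (mem_cons_self a s)
    -- rewrite LHS using piAntidiag_cons
    rw [piAntidiag_cons, sum_disjiUnion]
    -- inner sums
    have step1 : ∀ p : ℕ × ℕ, p ∈ antidiagonal m →
        (∑ k ∈ ((s.piAntidiag p.2).map
            (addRightEmbedding fun t => if t = a then p.1 else 0)),
          ∏ i ∈ cons a s ha, ((y i)⁻¹) ^ k i) =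
        ((y a)⁻¹) ^ p.1 * ∑ l ∈ s, ((y l)⁻¹) ^ p.2 * ∏ j ∈ s.erase l, (y j / (y j - y l)) := by
      intro p _
      rw [sum_map, ← IH' p.2, mul_sum]
      refine sum_congr rfl fun k hk => ?_
      have hksupp : ∀ i, k i ≠ 0 → i ∈ s := (mem_piAntidiag.1 hk).2
      have hka : k a = 0 := by
        by_contra h
        exact ha (hksupp a h)
      rw [prod_cons]
      simp only [addRightEmbedding_apply]
      have h1 : (k + fun t => if t = a then p.1 else 0) a = p.1 := by simp [hka]
      have h2 : ∀ j ∈ s, (k + fun t => if t = a then p.1 else 0) j = k j := by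
        intro j hj
        have : j ≠ a := fun h => ha (h ▸ hj)
        simp [this]
      rw [h1]
      congr 1
      exact prod_congr rfl fun j hj => by rw [h2 j hj]
    rw [sum_congr rfl step1]
    -- swap sums and sum the geometric series
    have haS : ∀ l ∈ s, a ≠ l := fun l hl h => ha (h ▸ hl)
    have hyal : ∀ l ∈ s, y a ≠ y l := fun l hl =>
      hyy a (mem_cons_self a s) l (mem_cons_of_mem hl) (haS l hl)
    have lhs1 : ∑ p ∈ antidiagonal m, ((y a)⁻¹) ^ p.1 *
          ∑ l ∈ s, ((y l)⁻¹) ^ p.2 * ∏ j ∈ s.erase l, (y j / (y j - y l)) =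
        ∑ l ∈ s, (((y a)⁻¹ ^ (m+1) - (y l)⁻¹ ^ (m+1)) / ((y a)⁻¹ - (y l)⁻¹)) *
          ∏ j ∈ s.erase l, (y j / (y j - y l)) := by
      simp_rw [mul_sum]
      rw [sum_comm]
      refine sum_congr rfl fun l hl => ?_
      have huv : (y a)⁻¹ ≠ (y l)⁻¹ := fun h => hyal l hl (inv_injective h)
      rw [← geomAux _ _ huv m, sum_mul]
      refine sum_congr rfl fun p _ => by ring
    rw [lhs1]
    -- rewrite RHS
    rw [sum_cons, erase_cons]
    have rhs2 : ∑ l ∈ s, ((y l)⁻¹) ^ m * ∏ j ∈ (cons a s ha).erase l, (y j / (y j - y l)) =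
        ∑ l ∈ s, ((y l)⁻¹) ^ m * ((y a / (y a - y l)) *
          ∏ j ∈ s.erase l, (y j / (y j - y l))) := by
      refine sum_congr rfl fun l hl => ?_
      rw [erase_cons_of_ne ha (haS l hl), prod_cons]
    rw [rhs2]
    -- split each geometric term into two pieces
    have key : ∀ l ∈ s, (((y a)⁻¹ ^ (m+1) - (y l)⁻¹ ^ (m+1)) / ((y a)⁻¹ - (y l)⁻¹)) *
          ∏ j ∈ s.erase l, (y j / (y j - y l)) =
        ((y a)⁻¹) ^ m * ((y l / (y l - y a)) * ∏ j ∈ s.erase l, (y j / (y j - y l))) +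
        ((y l)⁻¹) ^ m * ((y a / (y a - y l)) * ∏ j ∈ s.erase l, (y j / (y j - y l))) := by
      intro l hl
      have hu : y a ≠ 0 := hya
      have hv : y l ≠ 0 := hy0' l hl
      have huv : y a ≠ y l := hyal l hl
      have h1 : y l - y a ≠ 0 := sub_ne_zero.2 (Ne.symm huv)
      have h2 : y a - y l ≠ 0 := sub_ne_zero.2 huv
      have h3 : (y a)⁻¹ - (y l)⁻¹ ≠ 0 := sub_ne_zero.2 fun h => huv (inv_injective h)
      set C := ∏ j ∈ s.erase l, (y j / (y j - y l)) with hC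
      field_simp
      linear_combination (-(y l)^2 * (y a)⁻¹ ^ m * C + y a * y l * (y a)⁻¹ ^ m * C) * mul_inv_cancel₀ hu + (y a * y l * (y l)⁻¹ ^ m * C - (y a)^2 * (y l)⁻¹ ^ m * C) * mul_inv_cancel₀ hv
    rw [sum_congr rfl key, sum_add_distrib]
    congr 1
    -- the Lagrange part
    have hinj : Set.InjOn y s := fun i hi j hj hij => by
      by_contra h
      exact hyy' i hi j hj h hij
    have hz : ∀ j ∈ s, y j ≠ y a := fun j hj => (hyal j hj).symm
    rw [← mul_sum, lagrangeQ s hs y hinj (y a) hz]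

lemma tsum_prod_fin : ∀ (d : ℕ) (f : Fin d → ℕ → ℂ), (∀ i, Summable fun p => ‖f i p‖) →
    (Summable fun m : Fin d → ℕ => ‖∏ i, f i (m i)‖) ∧
      (∑' m : Fin d → ℕ, ∏ i, f i (m i)) = ∏ i, ∑' p, f i p := by
  intro d
  induction d with
  | zero =>
    intro f _
    have h0 : ∀ {M : Type} [AddCommMonoid M] [TopologicalSpace M] (g : (Fin 0 → ℕ) → M),
        HasSum g (g default) := fun g =>
      hasSum_single default (fun b hb => absurd (Subsingleton.elim b default) hb)
    constructor
    · exact (h0 _).summable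
    · rw [(h0 _).tsum_eq]
      simp
  | succ d IH =>
    intro f hf
    obtain ⟨hS, hT⟩ := IH (fun i => f i.succ) (fun i => hf i.succ)
    set e := Fin.consEquiv (fun _ : Fin (d + 1) => ℕ)
    have hcomp : ∀ z : ℕ × (Fin d → ℕ),
        (∏ i, f i (e z i)) = f 0 z.1 * ∏ i : Fin d, f i.succ (z.2 i) := by
      intro z
      rw [Fin.prod_univ_succ]
      simp [e, Fin.consEquiv]
    have hsum2 : Summable fun z : ℕ × (Fin d → ℕ) =>
        ‖f 0 z.1 * ∏ i : Fin d, f i.succ (z.2 i)‖ :=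
      Summable.mul_norm (R := ℂ) (f := f 0)
        (g := fun m : Fin d → ℕ => ∏ i : Fin d, f i.succ (m i)) (hf 0) hS
    constructor
    · rw [← e.summable_iff]
      refine hsum2.congr fun z => ?_
      simp only [Function.comp_apply, Function.comp_def, hcomp z]
    · rw [← e.tsum_eq]
      calc (∑' z : ℕ × (Fin d → ℕ), ∏ i, f i (e z i))
          = ∑' z : ℕ × (Fin d → ℕ), f 0 z.1 * ∏ i : Fin d, f i.succ (z.2 i) :=
            tsum_congr hcomp
        _ = (∑' p, f 0 p) * ∑' m : Fin d → ℕ, ∏ i : Fin d, f i.succ (m i) :=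
            (tsum_mul_tsum_of_summable_norm (f := f 0)
              (g := fun m : Fin d → ℕ => ∏ i : Fin d, f i.succ (m i)) (hf 0) hS).symm
        _ = ∏ i, ∑' p, f i p := by rw [hT, Fin.prod_univ_succ]

lemma tsum_prod_fintype {κ : Type*} [Fintype κ] (f : κ → ℕ → ℂ)
    (hf : ∀ i, Summable fun p => ‖f i p‖) :
    (Summable fun m : κ → ℕ => ‖∏ i, f i (m i)‖) ∧
      (∑' m : κ → ℕ, ∏ i, f i (m i)) = ∏ i, ∑' p, f i p := by
  set d := Fintype.card κ
  set e := Fintype.equivFin κ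
  set E : (Fin d → ℕ) ≃ (κ → ℕ) := Equiv.arrowCongr e.symm (Equiv.refl ℕ)
  obtain ⟨hS, hT⟩ := tsum_prod_fin d (fun i => f (e.symm i)) (fun i => hf (e.symm i))
  have hE : ∀ m' : Fin d → ℕ, (∏ i : κ, f i (E m' i)) = ∏ i : Fin d, f (e.symm i) (m' i) := by
    intro m'
    refine Fintype.prod_equiv e _ _ fun j => ?_
    simp [E, Equiv.arrowCongr]
  constructor
  · rw [← E.summable_iff]
    refine hS.congr fun m' => ?_
    simp only [Function.comp, hE m']
  · rw [← E.tsum_eq]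
    calc (∑' m' : Fin d → ℕ, ∏ i : κ, f i (E m' i))
        = ∑' m' : Fin d → ℕ, ∏ i : Fin d, f (e.symm i) (m' i) := tsum_congr hE
      _ = ∏ i : Fin d, ∑' p, f (e.symm i) p := hT
      _ = ∏ i : κ, ∑' p, f i p := Fintype.prod_equiv e.symm _ _ fun i => rfl

lemma E3 (r N : ℕ) (hr : 2 ≤ r) (hN : r ≤ N + 1) (A y : Fin r → ℂ)
    (hy0 : ∀ i, y i ≠ 0) (hyy : ∀ i j, i ≠ j → y i ≠ y j) :
    ∑ k ∈ (Fintype.piFinset fun _ : Fin r => Finset.Icc 1 N).filter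
        (fun k : Fin r → ℕ => ∑ i, k i = N + 1),
      ∏ i, (A i / y i ^ k i) =
    ∑ i, A i * (∏ j ∈ univ.erase i, (A j * y i / (y j - y i))) / y i ^ (N + 1) := by
  have hrN : r - 1 ≤ N := by omega
  -- Step 1 : reindex by shifting each part down by one
  have step1 : ∑ k ∈ (Fintype.piFinset fun _ : Fin r => Finset.Icc 1 N).filter
        (fun k : Fin r → ℕ => ∑ i, k i = N + 1),
      ∏ i, (A i / y i ^ k i) =
      ∑ k' ∈ (univ : Finset (Fin r)).piAntidiag (N + 1 - r),
        ∏ i, (A i / y i ^ (k' i + 1)) := by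
    refine Finset.sum_nbij' (fun k => fun i => k i - 1) (fun k' => fun i => k' i + 1)
      ?_ ?_ ?_ ?_ ?_
    · intro k hk
      simp only [mem_filter, Fintype.mem_piFinset, mem_Icc] at hk
      obtain ⟨hmem, hsum⟩ := hk
      rw [mem_piAntidiag]
      refine ⟨?_, fun i _ => mem_univ i⟩
      have h1 : ∑ i : Fin r, (k i - 1 + 1) = N + 1 := by
        rw [← hsum]
        exact Finset.sum_congr rfl fun i _ => by have := (hmem i).1; omega
      rw [Finset.sum_add_distrib, Finset.sum_const, card_univ, Fintype.card_fin,
        smul_eq_mul, mul_one] at h1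
      show ∑ i : Fin r, (k i - 1) = N + 1 - r
      omega
    · intro k' hk'
      rw [mem_piAntidiag] at hk'
      obtain ⟨hsum, -⟩ := hk'
      simp only [mem_filter, Fintype.mem_piFinset, mem_Icc]
      have hle : ∀ i, k' i ≤ N + 1 - r := hsum ▸ fun i =>
        Finset.single_le_sum (f := k') (fun j _ => Nat.zero_le _) (mem_univ i)
      constructor
      · intro i
        have := hle i
        omega
      · rw [Finset.sum_add_distrib, Finset.sum_const, card_univ, Fintype.card_fin,
          smul_eq_mul, mul_one, hsum]
        omega
    · intro k hk
      simp only [mem_filter, Fintype.mem_piFinset, mem_Icc] at hk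
      funext i
      show k i - 1 + 1 = k i
      have := (hk.1 i).1
      omega
    · intro k' _
      funext i
      show k' i + 1 - 1 = k' i
      omega
    · intro k hk
      simp only [mem_filter, Fintype.mem_piFinset, mem_Icc] at hk
      refine Finset.prod_congr rfl fun i _ => ?_
      have h1 := (hk.1 i).1
      show A i / y i ^ k i = A i / y i ^ (k i - 1 + 1)
      congr 2
      omega
  rw [step1]
  -- Step 2 : split off one power of each y i
  have step2 : ∀ k' : Fin r → ℕ, (∏ i, (A i / y i ^ (k' i + 1))) =
      (∏ i, (A i * (y i)⁻¹)) * ∏ i, ((y i)⁻¹) ^ k' i := by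
    intro k'
    rw [← Finset.prod_mul_distrib]
    refine Finset.prod_congr rfl fun i _ => ?_
    rw [pow_succ, div_eq_mul_inv, mul_inv, ← inv_pow]
    ring
  rw [Finset.sum_congr rfl fun k' _ => step2 k', ← Finset.mul_sum,
    compH y univ (haveI : Nonempty (Fin r) := Fin.pos_iff_nonempty.1 (by omega) ; univ_nonempty)
      (fun i _ => hy0 i)
      (fun i _ j _ hij => hyy i j hij) (N + 1 - r), Finset.mul_sum]
  -- Step 3 : per-i algebra
  refine Finset.sum_congr rfl fun i _ => ?_
  have hcard : (univ.erase i).card = r - 1 := by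
    rw [card_erase_of_mem (mem_univ i), card_univ, Fintype.card_fin]
  have hprodne : ∏ j ∈ univ.erase i, (y j - y i) ≠ 0 :=
    Finset.prod_ne_zero_iff.2 fun j hj =>
      sub_ne_zero.2 (hyy j i (Finset.ne_of_mem_erase hj))
  have hAprod : ∏ l, (A l * (y l)⁻¹) =
      (A i * (y i)⁻¹) * ∏ j ∈ univ.erase i, (A j * (y j)⁻¹) :=
    (Finset.mul_prod_erase univ _ (mem_univ i)).symm
  have hEprod : ∏ j ∈ univ.erase i, (A j * y i / (y j - y i)) =
      (∏ j ∈ univ.erase i, (A j * (y j)⁻¹)) * (y i ^ (r - 1) *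
        ∏ j ∈ univ.erase i, (y j / (y j - y i))) := by
    rw [← hcard, ← Finset.prod_const (b := y i), ← Finset.prod_mul_distrib,
      ← Finset.prod_mul_distrib]
    refine Finset.prod_congr rfl fun j hj => ?_
    have hyj : y j ≠ 0 := hy0 j
    have hji : y j - y i ≠ 0 := sub_ne_zero.2 (hyy j i (Finset.ne_of_mem_erase hj))
    field_simp
  rw [hAprod, hEprod]
  have hyi : y i ≠ 0 := hy0 i
  set P := ∏ j ∈ univ.erase i, (A j * (y j)⁻¹) with hP
  set Q := ∏ j ∈ univ.erase i, (y j / (y j - y i)) with hQ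
  have h1 : (y i)⁻¹ ^ (N + 1 - r) * (y i) ^ (N + 1 - r) = 1 := by
    rw [← mul_pow, inv_mul_cancel₀ hyi, one_pow]
  have h2 : (y i)⁻¹ * y i = 1 := inv_mul_cancel₀ hyi
  have hsplit : y i ^ (N + 1) = y i ^ (N + 1 - r) * (y i * y i ^ (r - 1)) := by
    have harith : (N + 1 - r) + (1 + (r - 1)) = N + 1 := by omega
    calc y i ^ (N + 1) = y i ^ ((N + 1 - r) + (1 + (r - 1))) := by rw [harith]
      _ = y i ^ (N + 1 - r) * (y i ^ 1 * y i ^ (r - 1)) := by rw [pow_add, pow_add]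
      _ = y i ^ (N + 1 - r) * (y i * y i ^ (r - 1)) := by rw [pow_one]
  rw [eq_div_iff (pow_ne_zero (N + 1) hyi), hsplit]
  calc A i * (y i)⁻¹ * P * ((y i)⁻¹ ^ (N + 1 - r) * Q) *
        (y i ^ (N + 1 - r) * (y i * y i ^ (r - 1)))
      = (A i * (P * (y i ^ (r - 1) * Q))) *
          (((y i)⁻¹ * y i) * ((y i)⁻¹ ^ (N + 1 - r) * y i ^ (N + 1 - r))) := by ring
    _ = A i * (P * (y i ^ (r - 1) * Q)) := by rw [h1, h2, mul_one, mul_one]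

lemma E5 (r : ℕ) (hr : 2 ≤ r) (a x : Fin r → ℕ → ℂ) (N : ℕ) (hN : r ≤ N + 1)
    (hx : ∀ i p, x i p ≠ 0)
    (hxx : ∀ i j p q, i ≠ j → x i p ≠ x j q)
    (hψ : ∀ i j p, i ≠ j → Summable (fun q => ‖a j q * x i p / (x j q - x i p)‖))
    (hR : ∀ i : Fin r, Summable (fun m : Fin r → ℕ =>
      ‖a i (m i) *
          (∏ j ∈ Finset.univ.erase i, (a j (m j) * x i (m i) / (x j (m j) - x i (m i)))) /
        x i (m i) ^ (N + 1)‖)) (i : Fin r) :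
    ∑' m : Fin r → ℕ,
      a i (m i) * (∏ j ∈ Finset.univ.erase i, (a j (m j) * x i (m i) / (x j (m j) - x i (m i)))) /
        x i (m i) ^ (N + 1) =
    ∑' p : ℕ,
      a i p * (∏ j ∈ Finset.univ.erase i, ∑' q : ℕ, a j q * x i p / (x j q - x i p)) /
        x i p ^ (N + 1) := by
  classical
  set R : (Fin r → ℕ) → ℂ := fun m =>
    a i (m i) * (∏ j ∈ Finset.univ.erase i, (a j (m j) * x i (m i) / (x j (m j) - x i (m i)))) /
      x i (m i) ^ (N + 1) with hRdef
  set e := Equiv.funSplitAt i ℕ with he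
  have herase : ∀ j : Fin r, j ∈ univ.erase i ↔ j ≠ i := by
    intro j; simp [mem_erase]
  have hz : ∀ (p : ℕ) (g : {j : Fin r // j ≠ i} → ℕ), R (e.symm (p, g)) =
      a i p * (∏ j' : {j : Fin r // j ≠ i},
        (a j'.1 (g j') * x i p / (x j'.1 (g j') - x i p))) / x i p ^ (N + 1) := by
    intro p g
    have hmi : (e.symm (p, g)) i = p := by simp [he]
    have hmj : ∀ (j : Fin r) (h : j ≠ i), (e.symm (p, g)) j = g ⟨j, h⟩ := by
      intro j h; simp [he, h]
    rw [hRdef]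
    simp only [hmi]
    congr 1
    congr 1
    rw [Finset.prod_subtype (univ.erase i) herase
      (fun j => a j ((e.symm (p, g)) j) * x i p / (x j ((e.symm (p, g)) j) - x i p))]
    refine Fintype.prod_congr _ _ fun j' => ?_
    rw [hmj j'.1 j'.2]
  have hsum : Summable fun z : ℕ × ({j : Fin r // j ≠ i} → ℕ) => R (e.symm z) :=
    (Equiv.summable_iff e.symm).2 (hR i).of_norm
  have hF : ∀ p : ℕ, ∀ j' : {j : Fin r // j ≠ i},
      Summable fun q => ‖a j'.1 q * x i p / (x j'.1 q - x i p)‖ := fun p j' =>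
    hψ i j'.1 p (Ne.symm j'.2)
  have hsum1 : ∀ p : ℕ, Summable fun g : {j : Fin r // j ≠ i} → ℕ => R (e.symm (p, g)) := by
    intro p
    refine Summable.congr ?_ fun g => (hz p g).symm
    exact (((tsum_prod_fintype _ (hF p)).1.of_norm).mul_left _).div_const _
  calc ∑' m : Fin r → ℕ, R m
      = ∑' z : ℕ × ({j : Fin r // j ≠ i} → ℕ), R (e.symm z) := (e.symm.tsum_eq R).symm
    _ = ∑' p, ∑' g : {j : Fin r // j ≠ i} → ℕ, R (e.symm (p, g)) := Summable.tsum_prod' hsum hsum1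
    _ = ∑' p, a i p * (∏ j' : {j : Fin r // j ≠ i},
          ∑' q, a j'.1 q * x i p / (x j'.1 q - x i p)) / x i p ^ (N + 1) := by
        refine tsum_congr fun p => ?_
        calc ∑' g : {j : Fin r // j ≠ i} → ℕ, R (e.symm (p, g))
            = ∑' g : {j : Fin r // j ≠ i} → ℕ, (a i p / x i p ^ (N + 1)) *
                ∏ j' : {j : Fin r // j ≠ i},
                  (a j'.1 (g j') * x i p / (x j'.1 (g j') - x i p)) := by
              refine tsum_congr fun g => ?_
              rw [hz p g, mul_div_right_comm]
          _ = (a i p / x i p ^ (N + 1)) * ∑' g : {j : Fin r // j ≠ i} → ℕ,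
                ∏ j' : {j : Fin r // j ≠ i},
                  (a j'.1 (g j') * x i p / (x j'.1 (g j') - x i p)) := tsum_mul_left
          _ = (a i p / x i p ^ (N + 1)) * ∏ j' : {j : Fin r // j ≠ i},
                ∑' q, a j'.1 q * x i p / (x j'.1 q - x i p) := by
              rw [(tsum_prod_fintype _ (hF p)).2]
          _ = a i p * (∏ j' : {j : Fin r // j ≠ i},
                ∑' q, a j'.1 q * x i p / (x j'.1 q - x i p)) / x i p ^ (N + 1) := by
              rw [mul_div_right_comm]
    _ = ∑' p, a i p * (∏ j ∈ Finset.univ.erase i, ∑' q : ℕ, a j q * x i p / (x j q - x i p)) /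
          x i p ^ (N + 1) := by
        refine tsum_congr fun p => ?_
        rw [Finset.prod_subtype (univ.erase i) herase
          (fun j => ∑' q, a j q * x i p / (x j q - x i p))]

/-- Main theorem: the r-fold convolution of Dirichlet series equals the sum of the
same r Dirichlet series with modified weights. -/
theorem statement8 (r : ℕ) (hr : 2 ≤ r) (a x : Fin r → ℕ → ℂ) (N : ℕ) (hN : r ≤ N + 1)
    (hx : ∀ i p, x i p ≠ 0)
    (hxx : ∀ i j p q, i ≠ j → x i p ≠ x j q)
    (ha : ∀ i k, 1 ≤ k → k ≤ N → Summable (fun p => ‖a i p / x i p ^ k‖))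
    (hψ : ∀ i j p, i ≠ j → Summable (fun q => ‖a j q * x i p / (x j q - x i p)‖))
    (hR : ∀ i : Fin r, Summable (fun m : Fin r → ℕ =>
      ‖a i (m i) *
          (∏ j ∈ Finset.univ.erase i, (a j (m j) * x i (m i) / (x j (m j) - x i (m i)))) /
        x i (m i) ^ (N + 1)‖)) :
    ∑ k ∈ (Fintype.piFinset fun _ : Fin r => Finset.Icc 1 N).filter
        (fun k : Fin r → ℕ => ∑ i, k i = N + 1),
      ∏ i : Fin r, (∑' p : ℕ, a i p / x i p ^ k i) =
    ∑ i : Fin r, ∑' p : ℕ,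
      a i p * (∏ j ∈ Finset.univ.erase i, ∑' q : ℕ, a j q * x i p / (x j q - x i p)) /
        x i p ^ (N + 1) := by
  classical
  have hKmem : ∀ k ∈ (Fintype.piFinset fun _ : Fin r => Finset.Icc 1 N).filter
      (fun k : Fin r → ℕ => ∑ i, k i = N + 1), ∀ i, 1 ≤ k i ∧ k i ≤ N := by
    intro k hk i
    rw [mem_filter, Fintype.mem_piFinset] at hk
    exact mem_Icc.1 (hk.1 i)
  have hfk : ∀ k ∈ (Fintype.piFinset fun _ : Fin r => Finset.Icc 1 N).filter
      (fun k : Fin r → ℕ => ∑ i, k i = N + 1), ∀ i : Fin r,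
      Summable fun p => ‖a i p / x i p ^ k i‖ := fun k hk i =>
    ha i (k i) (hKmem k hk i).1 (hKmem k hk i).2
  calc ∑ k ∈ (Fintype.piFinset fun _ : Fin r => Finset.Icc 1 N).filter
        (fun k : Fin r → ℕ => ∑ i, k i = N + 1),
      ∏ i : Fin r, (∑' p : ℕ, a i p / x i p ^ k i)
      = ∑ k ∈ (Fintype.piFinset fun _ : Fin r => Finset.Icc 1 N).filter
          (fun k : Fin r → ℕ => ∑ i, k i = N + 1),
        ∑' m : Fin r → ℕ, ∏ i : Fin r, a i (m i) / x i (m i) ^ k i :=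
      Finset.sum_congr rfl fun k hk =>
        (tsum_prod_fintype (fun i p => a i p / x i p ^ k i) (hfk k hk)).2.symm
    _ = ∑' m : Fin r → ℕ, ∑ k ∈ (Fintype.piFinset fun _ : Fin r => Finset.Icc 1 N).filter
          (fun k : Fin r → ℕ => ∑ i, k i = N + 1),
        ∏ i : Fin r, a i (m i) / x i (m i) ^ k i :=
      (Summable.tsum_finsetSum (s := (Fintype.piFinset fun _ : Fin r => Finset.Icc 1 N).filter
          (fun k : Fin r → ℕ => ∑ i, k i = N + 1))
        (f := fun k (m : Fin r → ℕ) => ∏ i : Fin r, a i (m i) / x i (m i) ^ k i)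
        fun k hk =>
        ((tsum_prod_fintype (fun i p => a i p / x i p ^ k i) (hfk k hk)).1).of_norm).symm
    _ = ∑' m : Fin r → ℕ, ∑ i : Fin r,
        a i (m i) * (∏ j ∈ Finset.univ.erase i,
          (a j (m j) * x i (m i) / (x j (m j) - x i (m i)))) / x i (m i) ^ (N + 1) :=
      tsum_congr fun m =>
        E3 r N hr hN (fun i => a i (m i)) (fun i => x i (m i)) (fun i => hx i (m i))
          (fun i j hij => hxx i j (m i) (m j) hij)
    _ = ∑ i : Fin r, ∑' m : Fin r → ℕ,
        a i (m i) * (∏ j ∈ Finset.univ.erase i,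
          (a j (m j) * x i (m i) / (x j (m j) - x i (m i)))) / x i (m i) ^ (N + 1) :=
      Summable.tsum_finsetSum (s := Finset.univ)
        (f := fun i (m : Fin r → ℕ) =>
          a i (m i) * (∏ j ∈ Finset.univ.erase i,
            (a j (m j) * x i (m i) / (x j (m j) - x i (m i)))) / x i (m i) ^ (N + 1))
        fun i _ => (hR i).of_norm
    _ = ∑ i : Fin r, ∑' p : ℕ,
        a i p * (∏ j ∈ Finset.univ.erase i, ∑' q : ℕ, a j q * x i p / (x j q - x i p)) /
          x i p ^ (N + 1) :=
      Finset.sum_congr rfl fun i _ => E5 r hr a x N hN hx hxx hψ hR i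
end

section
/- Let a, b : ℕ → ℂ be weight sequences and x, y : ℕ → ℂ sequences of nonzero complex numbers with x_p ≠ y_q for all p, q, and let z ∈ ℂ satisfy z ≠ x_p and z ≠ y_q for all p, q. Assume the double series Σ_{p,q} |a_p·b_q| · |z/(y_q − z)| · |y_q/(x_p − y_q)|, Σ_{p,q} |a_p·b_q| · |z/(x_p − z)| · |x_p/(y_q − x_p)| and Σ_{p,q} |a_p·b_q| · |z/(x_p − z)| · |z/(y_q − z)| converge. Then Σ_{p,q} a_p·b_q·(z/(y_q − z))·(y_q/(x_p − y_q)) + Σ_{p,q} a_p·b_q·(z/(x_p − z))·(x_p/(y_q − x_p)) = ( Σ_p a_p·z/(x_p − z) ) · ( Σ_q b_q·z/(y_q − z) ). -/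
lemma key_alg (X Y z : ℂ) (hXY : X ≠ Y) (hzX : z ≠ X) (hzY : z ≠ Y) :
    z / (Y - z) * (Y / (X - Y)) + z / (X - z) * (X / (Y - X)) =
      z / (X - z) * (z / (Y - z)) := by
  have h1 : X - Y ≠ 0 := sub_ne_zero.mpr hXY
  have h2 : Y - X ≠ 0 := sub_ne_zero.mpr hXY.symm
  have h3 : X - z ≠ 0 := sub_ne_zero.mpr (Ne.symm hzX)
  have h4 : Y - z ≠ 0 := sub_ne_zero.mpr (Ne.symm hzY)
  field_simp
  ring

/-- The sum-to-product composition rule for zeta generating functions: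
ψ_{x,a·ψ_y}(z) + ψ_{y,b·ψ_x}(z) = ψ_{x,a}(z)·ψ_{y,b}(z). -/
theorem statement9 (a b x y : ℕ → ℂ) (z : ℂ)
    (hx : ∀ p, x p ≠ 0) (hy : ∀ q, y q ≠ 0)
    (hxy : ∀ p q, x p ≠ y q)
    (hzx : ∀ p, z ≠ x p) (hzy : ∀ q, z ≠ y q)
    (h1 : Summable (fun t : ℕ × ℕ =>
      ‖a t.1 * b t.2‖ * ‖z / (y t.2 - z)‖ * ‖y t.2 / (x t.1 - y t.2)‖))
    (h2 : Summable (fun t : ℕ × ℕ =>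
      ‖a t.1 * b t.2‖ * ‖z / (x t.1 - z)‖ * ‖x t.1 / (y t.2 - x t.1)‖))
    (h3 : Summable (fun t : ℕ × ℕ =>
      ‖a t.1 * b t.2‖ * ‖z / (x t.1 - z)‖ * ‖z / (y t.2 - z)‖)) :
    (∑' t : ℕ × ℕ, a t.1 * b t.2 * (z / (y t.2 - z)) * (y t.2 / (x t.1 - y t.2))) +
      (∑' t : ℕ × ℕ, a t.1 * b t.2 * (z / (x t.1 - z)) * (x t.1 / (y t.2 - x t.1))) =
      (∑' p : ℕ, a p * z / (x p - z)) * (∑' q : ℕ, b q * z / (y q - z)) := by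
  have hs1 : Summable (fun t : ℕ × ℕ =>
      a t.1 * b t.2 * (z / (y t.2 - z)) * (y t.2 / (x t.1 - y t.2))) := by
    apply Summable.of_norm
    convert h1 using 2 with t
    simp [norm_mul]
  have hs2 : Summable (fun t : ℕ × ℕ =>
      a t.1 * b t.2 * (z / (x t.1 - z)) * (x t.1 / (y t.2 - x t.1))) := by
    apply Summable.of_norm
    convert h2 using 2 with t
    simp [norm_mul]
  have hs3 : Summable (fun t : ℕ × ℕ =>
      (a t.1 * (z / (x t.1 - z))) * (b t.2 * (z / (y t.2 - z)))) := by
    apply Summable.of_norm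
    convert h3 using 2 with t
    simp [norm_mul]
    ring
  rw [← Summable.tsum_add hs1 hs2]
  have hpt : ∀ t : ℕ × ℕ,
      a t.1 * b t.2 * (z / (y t.2 - z)) * (y t.2 / (x t.1 - y t.2)) +
        a t.1 * b t.2 * (z / (x t.1 - z)) * (x t.1 / (y t.2 - x t.1)) =
      (a t.1 * (z / (x t.1 - z))) * (b t.2 * (z / (y t.2 - z))) := by
    intro t
    have := key_alg (x t.1) (y t.2) z (hxy t.1 t.2) (hzx t.1) (hzy t.2)
    calc _ = a t.1 * b t.2 * (z / (y t.2 - z) * (y t.2 / (x t.1 - y t.2)) +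
            z / (x t.1 - z) * (x t.1 / (y t.2 - x t.1))) := by ring
      _ = _ := by rw [this]; ring
  rw [tsum_congr hpt, Summable.tsum_prod' hs3 (fun p => hs3.prod_factor p)]
  have : ∀ p : ℕ, (∑' q, (a p * (z / (x p - z))) * (b q * (z / (y q - z)))) =
      (a p * (z / (x p - z))) * (∑' q, b q * (z / (y q - z))) := fun p => tsum_mul_left
  rw [tsum_congr this, tsum_mul_right]
  congr 1
  · exact tsum_congr fun p => (mul_div_assoc _ _ _).symm
  · exact tsum_congr fun q => (mul_div_assoc _ _ _).symm
end

section
/- Let a, b : ℕ×ℕ → ℂ be doubly indexed weight sequences and x, y : ℕ×ℕ → ℂ doubly indexed sequences of nonzero complex numbers with x_{m,n} ≠ y_{p,q} for all indices, and let N be a positive integer. Assume that for every k with 1 ≤ k ≤ N the double series Σ_{m,n} a_{m,n}/x_{m,n}^k and Σ_{m,n} b_{m,n}/y_{m,n}^k converge absolutely, and that the quadruple series Σ |a_{m,n}|·|b_{p,q}|/(|x_{m,n}|^N·|x_{m,n} − y_{p,q}|) and Σ |a_{m,n}|·|b_{p,q}|/(|y_{p,q}|^N·|x_{m,n} − y_{p,q}|)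 converge. Then Σ_{k=1}^{N} ζ_{x,a}(k)·ζ_{y,b}(N+1−k) = Σ_{m,n} [ a_{m,n}·ψ_{y,b}(x_{m,n})/x_{m,n}^(N+1) + b_{m,n}·ψ_{x,a}(y_{m,n})/y_{m,n}^(N+1) ]. -/
lemma key_id (u v : ℂ) (hu : u ≠ 0) (hv : v ≠ 0) (huv : u ≠ v) (N : ℕ) :
    ∑ k ∈ Finset.Icc 1 N, 1 / (u ^ k * v ^ (N + 1 - k)) =
      1 / (u ^ N * (v - u)) + 1 / (v ^ N * (u - v)) := by
  have hvu : v - u ≠ 0 := sub_ne_zero.2 (Ne.symm huv)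
  have huv' : u - v ≠ 0 := sub_ne_zero.2 huv
  have hgeom := geom_sum₂_mul v u N
  have step1 : ∑ k ∈ Finset.Icc 1 N, 1 / (u ^ k * v ^ (N + 1 - k)) =
      (∑ i ∈ Finset.range N, v ^ i * u ^ (N - 1 - i)) / (u ^ N * v ^ N) := by
    rw [← Finset.Ico_add_one_right_eq_Icc, Finset.sum_Ico_eq_sum_range, Finset.sum_div]
    apply Finset.sum_congr rfl
    intro i hi
    have hi' : i < N := Finset.mem_range.1 hi
    have h1 : u ^ N = u ^ (1 + i) * u ^ (N - 1 - i) := by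
      rw [← pow_add]; congr 1; omega
    have h2 : v ^ N = v ^ (N + 1 - (1 + i)) * v ^ i := by
      rw [← pow_add]; congr 1; omega
    rw [h1, h2]
    have e1 : u ^ (1 + i) ≠ 0 := pow_ne_zero _ hu
    have e2 : u ^ (N - 1 - i) ≠ 0 := pow_ne_zero _ hu
    have e3 : v ^ (N + 1 - (1 + i)) ≠ 0 := pow_ne_zero _ hv
    have e4 : v ^ i ≠ 0 := pow_ne_zero _ hv
    field_simp
  rw [step1]
  have hs : (∑ i ∈ Finset.range N, v ^ i * u ^ (N - 1 - i)) = (v ^ N - u ^ N) / (v - u) := by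
    field_simp [hgeom]
    exact hgeom
  rw [hs]
  have e1 : u ^ N ≠ 0 := pow_ne_zero _ hu
  have e2 : v ^ N ≠ 0 := pow_ne_zero _ hv
  field_simp
  ring

/-- Two-fold convolution of doubly indexed Dirichlet series. -/
theorem statement14 (a b x y : ℕ × ℕ → ℂ) (N : ℕ) (hN : 1 ≤ N)
    (hx : ∀ p, x p ≠ 0) (hy : ∀ q, y q ≠ 0)
    (hxy : ∀ p q, x p ≠ y q)
    (ha : ∀ k, 1 ≤ k → k ≤ N → Summable (fun p : ℕ × ℕ => ‖a p / x p ^ k‖))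
    (hb : ∀ k, 1 ≤ k → k ≤ N → Summable (fun q : ℕ × ℕ => ‖b q / y q ^ k‖))
    (hdx : Summable (fun t : (ℕ × ℕ) × (ℕ × ℕ) =>
      ‖a t.1‖ * ‖b t.2‖ / (‖x t.1‖ ^ N * ‖x t.1 - y t.2‖)))
    (hdy : Summable (fun t : (ℕ × ℕ) × (ℕ × ℕ) =>
      ‖a t.1‖ * ‖b t.2‖ / (‖y t.2‖ ^ N * ‖x t.1 - y t.2‖))) :
    ∑ k ∈ Finset.Icc 1 N,
        (∑' p : ℕ × ℕ, a p / x p ^ k) * (∑' q : ℕ × ℕ, b q / y q ^ (N + 1 - k)) =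
      ∑' p : ℕ × ℕ,
        (a p * (∑' q : ℕ × ℕ, b q * x p / (y q - x p)) / x p ^ (N + 1) +
          b p * (∑' q : ℕ × ℕ, a q * y p / (x q - y p)) / y p ^ (N + 1)) := by
  set F : (ℕ × ℕ) × (ℕ × ℕ) → ℂ :=
    fun t => a t.1 * b t.2 / (x t.1 ^ N * (y t.2 - x t.1)) with hFdef
  set G : (ℕ × ℕ) × (ℕ × ℕ) → ℂ :=
    fun t => a t.1 * b t.2 / (y t.2 ^ N * (x t.1 - y t.2)) with hGdef
  have hsub : ∀ p q : ℕ × ℕ, y q - x p ≠ 0 := fun p q => sub_ne_zero.2 (Ne.symm (hxy p q))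
  have hsub' : ∀ p q : ℕ × ℕ, x p - y q ≠ 0 := fun p q => sub_ne_zero.2 (hxy p q)
  have hFs : Summable F := by
    apply Summable.of_norm
    refine hdx.congr fun t => ?_
    simp only [hFdef, norm_div, norm_mul, norm_pow]
    rw [norm_sub_rev]
  have hGs : Summable G := by
    apply Summable.of_norm
    refine hdy.congr fun t => ?_
    simp only [hGdef, norm_div, norm_mul, norm_pow]
  -- LHS transformation
  have hsum_k : ∀ k ∈ Finset.Icc 1 N,
      Summable (fun t : (ℕ × ℕ) × (ℕ × ℕ) =>
        (a t.1 / x t.1 ^ k) * (b t.2 / y t.2 ^ (N + 1 - k))) := by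
    intro k hk
    rw [Finset.mem_Icc] at hk
    exact ((ha k hk.1 hk.2).mul_norm (hb (N + 1 - k) (by omega) (by omega))).of_norm
  have hL1 : ∀ k ∈ Finset.Icc 1 N,
      (∑' p : ℕ × ℕ, a p / x p ^ k) * (∑' q : ℕ × ℕ, b q / y q ^ (N + 1 - k)) =
      ∑' t : (ℕ × ℕ) × (ℕ × ℕ), (a t.1 / x t.1 ^ k) * (b t.2 / y t.2 ^ (N + 1 - k)) := by
    intro k hk
    rw [Finset.mem_Icc] at hk
    exact tsum_mul_tsum_of_summable_norm (ha k hk.1 hk.2)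
      (hb (N + 1 - k) (by omega) (by omega))
  rw [Finset.sum_congr rfl hL1, ← Summable.tsum_finsetSum hsum_k]
  -- pointwise identity
  have hpt : ∀ t : (ℕ × ℕ) × (ℕ × ℕ),
      ∑ k ∈ Finset.Icc 1 N, (a t.1 / x t.1 ^ k) * (b t.2 / y t.2 ^ (N + 1 - k)) =
      F t + G t := by
    intro t
    have := key_id (x t.1) (y t.2) (hx t.1) (hy t.2) (hxy t.1 t.2) N
    calc ∑ k ∈ Finset.Icc 1 N, (a t.1 / x t.1 ^ k) * (b t.2 / y t.2 ^ (N + 1 - k))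
        = a t.1 * b t.2 * ∑ k ∈ Finset.Icc 1 N, 1 / (x t.1 ^ k * y t.2 ^ (N + 1 - k)) := by
          rw [Finset.mul_sum]
          exact Finset.sum_congr rfl fun k _ => by ring
      _ = a t.1 * b t.2 *
            (1 / (x t.1 ^ N * (y t.2 - x t.1)) + 1 / (y t.2 ^ N * (x t.1 - y t.2))) := by
          rw [this]
      _ = F t + G t := by
          simp only [hFdef, hGdef]
          ring
  rw [tsum_congr hpt, Summable.tsum_add hFs hGs]
  -- RHS transformation
  have ht1 : ∀ p : ℕ × ℕ,
      a p * (∑' q : ℕ × ℕ, b q * x p / (y q - x p)) / x p ^ (N + 1) =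
      ∑' q : ℕ × ℕ, F (p, q) := by
    intro p
    rw [mul_div_right_comm, ← tsum_mul_left]
    refine tsum_congr fun q => ?_
    simp only [hFdef]
    rw [pow_succ, div_mul_div_comm,
      show a p * (b q * x p) = a p * b q * x p from by ring,
      show x p ^ N * x p * (y q - x p) = x p ^ N * (y q - x p) * x p from by ring,
      mul_div_mul_right _ _ (hx p)]
  have ht2 : ∀ p : ℕ × ℕ,
      b p * (∑' q : ℕ × ℕ, a q * y p / (x q - y p)) / y p ^ (N + 1) =
      ∑' q : ℕ × ℕ, G (q, p) := by
    intro p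
    rw [mul_div_right_comm, ← tsum_mul_left]
    refine tsum_congr fun q => ?_
    simp only [hGdef]
    rw [pow_succ, div_mul_div_comm,
      show b p * (a q * y p) = a q * b p * y p from by ring,
      show y p ^ N * y p * (x q - y p) = y p ^ N * (x q - y p) * y p from by ring,
      mul_div_mul_right _ _ (hy p)]
  have hGswap : Summable (fun t : (ℕ × ℕ) × (ℕ × ℕ) => G (t.2, t.1)) := hGs.prod_symm
  calc (∑' t, F t) + (∑' t, G t)
      = (∑' p : ℕ × ℕ, ∑' q : ℕ × ℕ, F (p, q)) +
        (∑' p : ℕ × ℕ, ∑' q : ℕ × ℕ, G (q, p)) := by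
        have hsw : ∑' (t : (ℕ × ℕ) × (ℕ × ℕ)), G (t.2, t.1) = ∑' t, G t :=
          (Equiv.prodComm _ _).tsum_eq G
        rw [Summable.tsum_prod hFs, ← hsw, Summable.tsum_prod hGswap]
    _ = ∑' p : ℕ × ℕ,
        (a p * (∑' q : ℕ × ℕ, b q * x p / (y q - x p)) / x p ^ (N + 1) +
          b p * (∑' q : ℕ × ℕ, a q * y p / (x q - y p)) / y p ^ (N + 1)) := by
        rw [← Summable.tsum_add hFs.prod hGswap.prod]
        exact tsum_congr fun p => by rw [ht1 p, ht2 p]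
end

section
/- Let α, β be positive real numbers and N a positive integer. Then Σ_{k=1}^{N} (−1)^k·α^(2k)·β^(2N+2−2k)·ζ(2k)²·ζ(2N+2−2k)² = −β^(2N+2)·Σ_{m=1}^∞ Σ_{n=1}^∞ (τ₀(n)·τ₀(m)/m^(2N))·α²/(β²n² + α²m²) − (−1)^(N+1)·α^(2N+2)·Σ_{m=1}^∞ Σ_{n=1}^∞ (τ₀(n)·τ₀(m)/n^(2N))·β²/(α²m² + β²n²). -/
/-- The Riemann zeta function at integer arguments `s ≥ 2`,
given by the series `∑_{m=1}^∞ 1/m^s`. -/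
noncomputable def zetaR (s : ℕ) : ℝ := ∑' m : ℕ, 1 / ((m : ℝ) + 1) ^ s

/-- The number of positive divisors of `n`. -/
noncomputable def tau0 (n : ℕ) : ℝ := (n.divisors.card : ℝ)


/-- auxiliary: the summand `τ(n+1)/(n+1)^s`. -/
noncomputable def tq (s n : ℕ) : ℝ := tau0 (n + 1) / ((n : ℝ) + 1) ^ s

lemma tau0_nonneg (n : ℕ) : 0 ≤ tau0 n := by
  simp [tau0]

lemma tq_nonneg (s n : ℕ) : 0 ≤ tq s n := by
  have := tau0_nonneg (n + 1)
  have h : (0:ℝ) ≤ ((n : ℝ) + 1) ^ s := by positivity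
  exact div_nonneg this h

lemma summable_basic {s : ℕ} (hs : 2 ≤ s) :
    Summable (fun n : ℕ => 1 / ((n : ℝ) + 1) ^ s) := by
  have h : Summable (fun n : ℕ => 1 / (n : ℝ) ^ s) := by
    rw [Real.summable_one_div_nat_pow]; exact hs
  have := (summable_nat_add_iff 1).2 h
  refine this.congr fun n => ?_
  push_cast
  ring_nf

lemma key_fiber (s n : ℕ) :
    (∑' p : (fun p : ℕ × ℕ => (p.1 + 1) * (p.2 + 1) - 1) ⁻¹' {n},
      (1 / ((p.1.1 : ℝ) + 1) ^ s) * (1 / ((p.1.2 : ℝ) + 1) ^ s))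
    = tau0 (n + 1) / ((n : ℝ) + 1) ^ s := by
  classical
  set T : Finset (ℕ × ℕ) :=
    ((n + 1).divisorsAntidiagonal).image (fun q => (q.1 - 1, q.2 - 1)) with hT
  have hSet : (fun p : ℕ × ℕ => (p.1 + 1) * (p.2 + 1) - 1) ⁻¹' {n} = ↑T := by
    ext ⟨a, b⟩
    simp only [Set.mem_preimage, Set.mem_singleton_iff, hT, Finset.coe_image, Set.mem_image,
      Finset.mem_coe, Nat.mem_divisorsAntidiagonal, Prod.exists]
    constructor
    · intro h
      have hP : 1 ≤ (a + 1) * (b + 1) :=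
        Nat.one_le_iff_ne_zero.mpr (Nat.mul_ne_zero (by omega) (by omega))
      refine ⟨a + 1, b + 1, ⟨by omega, by omega⟩, by simp⟩
    · rintro ⟨x, y, ⟨hxy, -⟩, h⟩
      have hx : x ≠ 0 := by rintro rfl; simp at hxy
      have hy : y ≠ 0 := by rintro rfl; simp at hxy
      have h1 : x - 1 = a := congrArg Prod.fst h
      have h2 : y - 1 = b := congrArg Prod.snd h
      have ha : x = a + 1 := by omega
      have hb : y = b + 1 := by omega
      subst ha hb
      omega
  rw [hSet, Finset.tsum_subtype' T
    (fun p : ℕ × ℕ => (1 / ((p.1 : ℝ) + 1) ^ s) * (1 / ((p.2 : ℝ) + 1) ^ s))]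
  rw [hT, Finset.sum_image]
  · have hterm : ∀ q ∈ (n + 1).divisorsAntidiagonal,
        (1 / (((q.1 - 1 : ℕ) : ℝ) + 1) ^ s) * (1 / (((q.2 - 1 : ℕ) : ℝ) + 1) ^ s)
          = 1 / ((n : ℝ) + 1) ^ s := by
      intro q hq
      obtain ⟨hprod, -⟩ := Nat.mem_divisorsAntidiagonal.mp hq
      have hq1 : q.1 ≠ 0 := (Nat.ne_zero_of_mem_divisorsAntidiagonal hq).1
      have hq2 : q.2 ≠ 0 := (Nat.ne_zero_of_mem_divisorsAntidiagonal hq).2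
      have e1 : ((q.1 - 1 : ℕ) : ℝ) + 1 = (q.1 : ℝ) := by
        have : q.1 - 1 + 1 = q.1 := by omega
        exact_mod_cast congrArg (Nat.cast : ℕ → ℝ) this
      have e2 : ((q.2 - 1 : ℕ) : ℝ) + 1 = (q.2 : ℝ) := by
        have : q.2 - 1 + 1 = q.2 := by omega
        exact_mod_cast congrArg (Nat.cast : ℕ → ℝ) this
      rw [e1, e2, div_mul_div_comm, one_mul, ← mul_pow, ← Nat.cast_mul, hprod]
      push_cast
      ring
    rw [Finset.sum_congr rfl hterm, Finset.sum_const, nsmul_eq_mul]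
    have hcard : ((n + 1).divisorsAntidiagonal).card = (n + 1).divisors.card := by
      rw [← Nat.map_div_right_divisors, Finset.card_map]
    rw [hcard, tau0, mul_one_div]
  · intro x hx y hy hxy
    have hx1 : x.1 ≠ 0 := (Nat.ne_zero_of_mem_divisorsAntidiagonal hx).1
    have hx2 : x.2 ≠ 0 := (Nat.ne_zero_of_mem_divisorsAntidiagonal hx).2
    have hy1 : y.1 ≠ 0 := (Nat.ne_zero_of_mem_divisorsAntidiagonal hy).1
    have hy2 : y.2 ≠ 0 := (Nat.ne_zero_of_mem_divisorsAntidiagonal hy).2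
    have h1 := congrArg Prod.fst hxy
    have h2 := congrArg Prod.snd hxy
    simp only at h1 h2
    ext
    · omega
    · omega

set_option maxHeartbeats 2000000 in
lemma hasSum_tau {s : ℕ} (hs : 2 ≤ s) :
    HasSum (fun n : ℕ => tq s n) (zetaR s * zetaR s) := by
  have hb := summable_basic hs
  have hprod : Summable (fun p : ℕ × ℕ =>
      (1 / ((p.1 : ℝ) + 1) ^ s) * (1 / ((p.2 : ℝ) + 1) ^ s)) :=
    hb.mul_of_nonneg hb (fun n => by positivity) (fun n => by positivity)
  have hF : HasSum (fun p : ℕ × ℕ =>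
      (1 / ((p.1 : ℝ) + 1) ^ s) * (1 / ((p.2 : ℝ) + 1) ^ s)) (zetaR s * zetaR s) :=
    HasSum.mul hb.hasSum hb.hasSum hprod
  have hfib := hF.tsum_fiberwise (fun p : ℕ × ℕ => (p.1 + 1) * (p.2 + 1) - 1)
  rw [funext (key_fiber s)] at hfib
  exact hfib

lemma summable_tq {s : ℕ} (hs : 2 ≤ s) : Summable (tq s) :=
  (hasSum_tau hs).summable

lemma tsum_tq {s : ℕ} (hs : 2 ≤ s) : ∑' n, tq s n = zetaR s ^ 2 := by
  rw [pow_two]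
  exact (hasSum_tau hs).tsum_eq

lemma alg (x y : ℝ) (N : ℕ) (hN : 1 ≤ N) :
    (∑ k ∈ Finset.Icc 1 N, (-1:ℝ) ^ k * x ^ k * y ^ (N + 1 - k)) * (x + y)
      = -(x * y ^ (N + 1)) + (-1:ℝ) ^ N * (x ^ (N + 1) * y) := by
  induction N, hN using Nat.le_induction with
  | base => simp; ring
  | succ n hn ih =>
    rw [Finset.sum_Icc_succ_top (by omega : 1 ≤ n + 1)]
    have hcong : ∀ k ∈ Finset.Icc 1 n,
        (-1:ℝ) ^ k * x ^ k * y ^ (n + 1 + 1 - k)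
          = ((-1:ℝ) ^ k * x ^ k * y ^ (n + 1 - k)) * y := by
      intro k hk
      have hk' : k ≤ n := (Finset.mem_Icc.mp hk).2
      have h : n + 1 + 1 - k = (n + 1 - k) + 1 := by omega
      rw [h, pow_succ]; ring
    rw [Finset.sum_congr rfl hcong, ← Finset.sum_mul]
    have h1 : n + 1 + 1 - (n + 1) = 1 := by omega
    rw [h1, pow_one]
    linear_combination y * ih

lemma pointwise (t A B P Q : ℝ) (hA : 0 < A) (hB : 0 < B) (hP : 0 < P) (hQ : 0 < Q)
    (N : ℕ) (hN : 1 ≤ N) :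
    ∑ k ∈ Finset.Icc 1 N, t * ((-1:ℝ) ^ k * (A / Q) ^ k * (B / P) ^ (N + 1 - k))
      = -B ^ (N + 1) * (t / P ^ N * (A / (B * Q + A * P)))
        - (-1:ℝ) ^ (N + 1) * A ^ (N + 1) * (t / Q ^ N * (B / (A * P + B * Q))) := by
  rw [← Finset.mul_sum]
  have hxy : 0 < A / Q + B / P := by positivity
  have hsum : (∑ k ∈ Finset.Icc 1 N, (-1:ℝ) ^ k * (A / Q) ^ k * (B / P) ^ (N + 1 - k))
      = (-((A / Q) * (B / P) ^ (N + 1)) + (-1:ℝ) ^ N * ((A / Q) ^ (N + 1) * (B / P)))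
        / (A / Q + B / P) := by
    rw [eq_div_iff (ne_of_gt hxy)]
    exact alg (A / Q) (B / P) N hN
  rw [hsum, pow_succ (-1:ℝ) N]
  have hQ0 : Q ≠ 0 := ne_of_gt hQ
  have hP0 : P ≠ 0 := ne_of_gt hP
  have hD1 : B * Q + A * P ≠ 0 := by positivity
  have hD2 : A * P + B * Q ≠ 0 := by positivity
  have hxy0 : A / Q + B / P ≠ 0 := ne_of_gt hxy
  set c : ℝ := (-1:ℝ) ^ N with hc
  have hQN : Q ^ N ≠ 0 := pow_ne_zero _ hQ0
  have hPN : P ^ N ≠ 0 := pow_ne_zero _ hP0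
  field_simp
  rw [div_pow, div_pow]
  field_simp
  ring

/-- summand of the rearranged double series, for each `k`. -/
noncomputable def FF (α β : ℝ) (N k m n : ℕ) : ℝ :=
  (((-1:ℝ) ^ k * α ^ (2 * k) * β ^ (2 * (N + 1 - k))) * tq (2 * (N + 1 - k)) m) * tq (2 * k) n

/-- summand of the first double series on the RHS. -/
noncomputable def U1 (α β : ℝ) (N m n : ℕ) : ℝ :=
  (tau0 (n + 1) * tau0 (m + 1) / ((m : ℝ) + 1) ^ (2 * N)) *
    (α ^ 2 / (β ^ 2 * ((n : ℝ) + 1) ^ 2 + α ^ 2 * ((m : ℝ) + 1) ^ 2))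

/-- summand of the second double series on the RHS. -/
noncomputable def U2 (α β : ℝ) (N m n : ℕ) : ℝ :=
  (tau0 (n + 1) * tau0 (m + 1) / ((n : ℝ) + 1) ^ (2 * N)) *
    (β ^ 2 / (α ^ 2 * ((m : ℝ) + 1) ^ 2 + β ^ 2 * ((n : ℝ) + 1) ^ 2))

lemma step1 (α β : ℝ) {N k : ℕ} (hk1 : 1 ≤ k) (hk2 : k ≤ N) :
    (-1:ℝ) ^ k * α ^ (2 * k) * β ^ (2 * N + 2 - 2 * k) *
        zetaR (2 * k) ^ 2 * zetaR (2 * (N + 1 - k)) ^ 2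
      = ∑' m : ℕ, ∑' n : ℕ, FF α β N k m n := by
  have hs : 2 ≤ 2 * k := by omega
  have ht : 2 ≤ 2 * (N + 1 - k) := by omega
  have hβe : 2 * N + 2 - 2 * k = 2 * (N + 1 - k) := by omega
  rw [hβe, ← tsum_tq hs, ← tsum_tq ht]
  simp only [FF, tsum_mul_left, tsum_mul_right]
  ring

lemma summable_FF_inner (α β : ℝ) {N k : ℕ} (hk1 : 1 ≤ k) (m : ℕ) :
    Summable (fun n => FF α β N k m n) := by
  simp only [FF]
  exact (summable_tq (by omega)).mul_left _

lemma summable_FF_outer (α β : ℝ) {N k : ℕ} (hk1 : 1 ≤ k) (hk2 : k ≤ N) :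
    Summable (fun m => ∑' n, FF α β N k m n) := by
  have h : (fun m => ∑' n, FF α β N k m n)
      = fun m => (((-1:ℝ) ^ k * α ^ (2 * k) * β ^ (2 * (N + 1 - k))) * (∑' n, tq (2 * k) n))
          * tq (2 * (N + 1 - k)) m := by
    funext m
    simp only [FF, tsum_mul_left]
    ring
  rw [h]
  exact ((summable_tq (by omega)).mul_left _)

lemma pointwise_full (α β : ℝ) (hα : 0 < α) (hβ : 0 < β) {N : ℕ} (hN : 1 ≤ N) (m n : ℕ) :
    ∑ k ∈ Finset.Icc 1 N, FF α β N k m n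
      = -β ^ (2 * N + 2) * U1 α β N m n - (-1:ℝ) ^ (N + 1) * α ^ (2 * N + 2) * U2 α β N m n := by
  have hA : (0:ℝ) < α ^ 2 := by positivity
  have hB : (0:ℝ) < β ^ 2 := by positivity
  have hP : (0:ℝ) < ((m : ℝ) + 1) ^ 2 := by positivity
  have hQ : (0:ℝ) < ((n : ℝ) + 1) ^ 2 := by positivity
  have key := pointwise (tau0 (n + 1) * tau0 (m + 1)) (α ^ 2) (β ^ 2)
    (((m : ℝ) + 1) ^ 2) (((n : ℝ) + 1) ^ 2) hA hB hP hQ N hN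
  have hFF : ∀ k ∈ Finset.Icc 1 N, FF α β N k m n
      = (tau0 (n + 1) * tau0 (m + 1)) *
          ((-1:ℝ) ^ k * (α ^ 2 / ((n : ℝ) + 1) ^ 2) ^ k *
            (β ^ 2 / ((m : ℝ) + 1) ^ 2) ^ (N + 1 - k)) := by
    intro k hk
    simp only [FF, tq]
    rw [div_pow, div_pow, ← pow_mul, ← pow_mul, ← pow_mul, ← pow_mul]
    ring
  rw [Finset.sum_congr rfl hFF, key]
  have e1 : (β ^ 2) ^ (N + 1) = β ^ (2 * N + 2) := by
    rw [show 2 * N + 2 = 2 * (N + 1) from by omega, pow_mul]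
  have e2 : (α ^ 2) ^ (N + 1) = α ^ (2 * N + 2) := by
    rw [show 2 * N + 2 = 2 * (N + 1) from by omega, pow_mul]
  have e3 : (((m : ℝ) + 1) ^ 2) ^ N = ((m : ℝ) + 1) ^ (2 * N) := by
    rw [pow_mul]
  have e4 : (((n : ℝ) + 1) ^ 2) ^ N = ((n : ℝ) + 1) ^ (2 * N) := by
    rw [pow_mul]
  rw [e1, e2, e3, e4]
  simp only [U1, U2]

lemma U1_nonneg (α β : ℝ) (N m n : ℕ) : 0 ≤ U1 α β N m n := by
  apply mul_nonneg
  · exact div_nonneg (mul_nonneg (tau0_nonneg _) (tau0_nonneg _)) (by positivity)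
  · exact div_nonneg (by positivity) (by positivity)

lemma U2_nonneg (α β : ℝ) (N m n : ℕ) : 0 ≤ U2 α β N m n := by
  apply mul_nonneg
  · exact div_nonneg (mul_nonneg (tau0_nonneg _) (tau0_nonneg _)) (by positivity)
  · exact div_nonneg (by positivity) (by positivity)

lemma U1_le (α β : ℝ) (hα : 0 < α) (hβ : 0 < β) (N m n : ℕ) :
    U1 α β N m n ≤ (tau0 (m + 1) / ((m : ℝ) + 1) ^ (2 * N) * (α ^ 2 / β ^ 2)) * tq 2 n := by
  have ht : 0 ≤ tau0 (n + 1) * tau0 (m + 1) / ((m : ℝ) + 1) ^ (2 * N) :=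
    div_nonneg (mul_nonneg (tau0_nonneg _) (tau0_nonneg _)) (by positivity)
  have h1 : α ^ 2 / (β ^ 2 * ((n : ℝ) + 1) ^ 2 + α ^ 2 * ((m : ℝ) + 1) ^ 2)
      ≤ α ^ 2 / (β ^ 2 * ((n : ℝ) + 1) ^ 2) := by
    gcongr
    exact le_add_of_nonneg_right (by positivity)
  calc U1 α β N m n
      ≤ (tau0 (n + 1) * tau0 (m + 1) / ((m : ℝ) + 1) ^ (2 * N)) *
          (α ^ 2 / (β ^ 2 * ((n : ℝ) + 1) ^ 2)) := mul_le_mul_of_nonneg_left h1 ht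
    _ = (tau0 (m + 1) / ((m : ℝ) + 1) ^ (2 * N) * (α ^ 2 / β ^ 2)) * tq 2 n := by
        have hm0 : ((m:ℝ) + 1) ≠ 0 := by positivity
        have hn0 : ((n:ℝ) + 1) ≠ 0 := by positivity
        simp only [tq]; field_simp

lemma U2_le_n (α β : ℝ) (hα : 0 < α) (hβ : 0 < β) (N m n : ℕ) :
    U2 α β N m n ≤ tau0 (m + 1) * tq (2 * N + 2) n := by
  have ht : 0 ≤ tau0 (n + 1) * tau0 (m + 1) / ((n : ℝ) + 1) ^ (2 * N) :=
    div_nonneg (mul_nonneg (tau0_nonneg _) (tau0_nonneg _)) (by positivity)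
  have h1 : β ^ 2 / (α ^ 2 * ((m : ℝ) + 1) ^ 2 + β ^ 2 * ((n : ℝ) + 1) ^ 2)
      ≤ β ^ 2 / (β ^ 2 * ((n : ℝ) + 1) ^ 2) := by
    gcongr
    exact le_add_of_nonneg_left (by positivity)
  calc U2 α β N m n
      ≤ (tau0 (n + 1) * tau0 (m + 1) / ((n : ℝ) + 1) ^ (2 * N)) *
          (β ^ 2 / (β ^ 2 * ((n : ℝ) + 1) ^ 2)) := mul_le_mul_of_nonneg_left h1 ht
    _ = tau0 (m + 1) * tq (2 * N + 2) n := by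
        simp only [tq]
        rw [pow_add]
        field_simp

lemma U2_le_m (α β : ℝ) (hα : 0 < α) (hβ : 0 < β) (N m n : ℕ) :
    U2 α β N m n ≤ (β ^ 2 / α ^ 2 * tq 2 m) * tq (2 * N) n := by
  have ht : 0 ≤ tau0 (n + 1) * tau0 (m + 1) / ((n : ℝ) + 1) ^ (2 * N) :=
    div_nonneg (mul_nonneg (tau0_nonneg _) (tau0_nonneg _)) (by positivity)
  have h1 : β ^ 2 / (α ^ 2 * ((m : ℝ) + 1) ^ 2 + β ^ 2 * ((n : ℝ) + 1) ^ 2)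
      ≤ β ^ 2 / (α ^ 2 * ((m : ℝ) + 1) ^ 2) := by
    gcongr
    exact le_add_of_nonneg_right (by positivity)
  calc U2 α β N m n
      ≤ (tau0 (n + 1) * tau0 (m + 1) / ((n : ℝ) + 1) ^ (2 * N)) *
          (β ^ 2 / (α ^ 2 * ((m : ℝ) + 1) ^ 2)) := mul_le_mul_of_nonneg_left h1 ht
    _ = (β ^ 2 / α ^ 2 * tq 2 m) * tq (2 * N) n := by
        have hm0 : ((m:ℝ) + 1) ≠ 0 := by positivity
        have hn0 : ((n:ℝ) + 1) ≠ 0 := by positivity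
        simp only [tq]; field_simp

lemma summable_U1_n (α β : ℝ) (hα : 0 < α) (hβ : 0 < β) (N m : ℕ) :
    Summable (fun n => U1 α β N m n) :=
  Summable.of_nonneg_of_le (fun n => U1_nonneg α β N m n) (fun n => U1_le α β hα hβ N m n)
    ((summable_tq (le_refl 2)).mul_left _)

lemma summable_U2_n (α β : ℝ) (hα : 0 < α) (hβ : 0 < β) (N m : ℕ) :
    Summable (fun n => U2 α β N m n) :=
  Summable.of_nonneg_of_le (fun n => U2_nonneg α β N m n) (fun n => U2_le_n α β hα hβ N m n)
    ((summable_tq (by omega)).mul_left _)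

lemma summable_U1_m (α β : ℝ) (hα : 0 < α) (hβ : 0 < β) {N : ℕ} (hN : 1 ≤ N) :
    Summable (fun m => ∑' n, U1 α β N m n) := by
  have hN2 : 2 ≤ 2 * N := by omega
  apply Summable.of_nonneg_of_le
    (fun m => tsum_nonneg (fun n => U1_nonneg α β N m n))
    (fun m => ?_) (((summable_tq hN2).mul_left (α ^ 2 / β ^ 2 * ∑' n, tq 2 n)))
  calc (∑' n, U1 α β N m n)
      ≤ ∑' n, (tau0 (m + 1) / ((m : ℝ) + 1) ^ (2 * N) * (α ^ 2 / β ^ 2)) * tq 2 n :=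
        Summable.tsum_le_tsum (fun n => U1_le α β hα hβ N m n) (summable_U1_n α β hα hβ N m)
          ((summable_tq (le_refl 2)).mul_left _)
    _ = (tau0 (m + 1) / ((m : ℝ) + 1) ^ (2 * N) * (α ^ 2 / β ^ 2)) * ∑' n, tq 2 n :=
        tsum_mul_left
    _ = α ^ 2 / β ^ 2 * (∑' n, tq 2 n) * tq (2 * N) m := by
        have hm0 : ((m:ℝ) + 1) ≠ 0 := by positivity
        simp only [tq]; field_simp

lemma summable_U2_m (α β : ℝ) (hα : 0 < α) (hβ : 0 < β) {N : ℕ} (hN : 1 ≤ N) :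
    Summable (fun m => ∑' n, U2 α β N m n) := by
  have hN2 : 2 ≤ 2 * N := by omega
  apply Summable.of_nonneg_of_le
    (fun m => tsum_nonneg (fun n => U2_nonneg α β N m n))
    (fun m => ?_) (((summable_tq (le_refl 2)).mul_left (β ^ 2 / α ^ 2 * ∑' n, tq (2 * N) n)))
  calc (∑' n, U2 α β N m n)
      ≤ ∑' n, (β ^ 2 / α ^ 2 * tq 2 m) * tq (2 * N) n :=
        Summable.tsum_le_tsum (fun n => U2_le_m α β hα hβ N m n) (summable_U2_n α β hα hβ N m)
          ((summable_tq hN2).mul_left _)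
    _ = (β ^ 2 / α ^ 2 * tq 2 m) * ∑' n, tq (2 * N) n := tsum_mul_left
    _ = β ^ 2 / α ^ 2 * (∑' n, tq (2 * N) n) * tq 2 m := by ring

/-- Convolution identity for squares of zeta values (squares of Bernoulli numbers). -/
theorem statement15 (α β : ℝ) (hα : 0 < α) (hβ : 0 < β) (N : ℕ) (hN : 1 ≤ N) :
    ∑ k ∈ Finset.Icc 1 N,
        (-1 : ℝ) ^ k * α ^ (2 * k) * β ^ (2 * N + 2 - 2 * k) *
          zetaR (2 * k) ^ 2 * zetaR (2 * (N + 1 - k)) ^ 2 =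
      -β ^ (2 * N + 2) *
          (∑' m : ℕ, ∑' n : ℕ,
            (tau0 (n + 1) * tau0 (m + 1) / ((m : ℝ) + 1) ^ (2 * N)) *
              (α ^ 2 / (β ^ 2 * ((n : ℝ) + 1) ^ 2 + α ^ 2 * ((m : ℝ) + 1) ^ 2))) -
        (-1 : ℝ) ^ (N + 1) * α ^ (2 * N + 2) *
          (∑' m : ℕ, ∑' n : ℕ,
            (tau0 (n + 1) * tau0 (m + 1) / ((n : ℝ) + 1) ^ (2 * N)) *
              (β ^ 2 / (α ^ 2 * ((m : ℝ) + 1) ^ 2 + β ^ 2 * ((n : ℝ) + 1) ^ 2))) := by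
  calc
    ∑ k ∈ Finset.Icc 1 N,
        (-1 : ℝ) ^ k * α ^ (2 * k) * β ^ (2 * N + 2 - 2 * k) *
          zetaR (2 * k) ^ 2 * zetaR (2 * (N + 1 - k)) ^ 2
      = ∑ k ∈ Finset.Icc 1 N, ∑' m : ℕ, ∑' n : ℕ, FF α β N k m n :=
        Finset.sum_congr rfl (fun k hk =>
          step1 α β (Finset.mem_Icc.mp hk).1 (Finset.mem_Icc.mp hk).2)
    _ = ∑' m : ℕ, ∑ k ∈ Finset.Icc 1 N, ∑' n : ℕ, FF α β N k m n :=
        (Summable.tsum_finsetSum (fun k hk =>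
          summable_FF_outer α β (Finset.mem_Icc.mp hk).1 (Finset.mem_Icc.mp hk).2)).symm
    _ = ∑' m : ℕ, ∑' n : ℕ, ∑ k ∈ Finset.Icc 1 N, FF α β N k m n :=
        tsum_congr fun m => (Summable.tsum_finsetSum fun k hk =>
          summable_FF_inner α β (Finset.mem_Icc.mp hk).1 m).symm
    _ = ∑' m : ℕ, ∑' n : ℕ,
          (-β ^ (2 * N + 2) * U1 α β N m n
            - (-1:ℝ) ^ (N + 1) * α ^ (2 * N + 2) * U2 α β N m n) :=
        tsum_congr fun m => tsum_congr fun n => pointwise_full α β hα hβ hN m n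
    _ = ∑' m : ℕ,
          (-β ^ (2 * N + 2) * ∑' n : ℕ, U1 α β N m n
            - (-1:ℝ) ^ (N + 1) * α ^ (2 * N + 2) * ∑' n : ℕ, U2 α β N m n) := by
        refine tsum_congr fun m => ?_
        rw [Summable.tsum_sub ((summable_U1_n α β hα hβ N m).mul_left _)
          ((summable_U2_n α β hα hβ N m).mul_left _), tsum_mul_left, tsum_mul_left]
    _ = -β ^ (2 * N + 2) * (∑' m : ℕ, ∑' n : ℕ, U1 α β N m n)
          - (-1:ℝ) ^ (N + 1) * α ^ (2 * N + 2) * (∑' m : ℕ, ∑' n : ℕ, U2 α β N m n) := by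
        rw [Summable.tsum_sub ((summable_U1_m α β hα hβ hN).mul_left _)
          ((summable_U2_m α β hα hβ hN).mul_left _), tsum_mul_left, tsum_mul_left]
    _ = _ := by simp only [U1, U2]
end
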